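/- Let Q : [0, ∞) → ℝ be differentiable with Q(0) = Q⁰ > 0, and suppose Q'(t) ≥ 2κ(t)·Q(t)² where κ : [0,∞) → ℝ is continuous and strictly positive. If additionally Q(t) ≤ C(1+t)² for all t ≥ 0 (for some constant C), then ∫_0^∞ κ(t) dt ≤ 1/(2Q⁰). -/

import Mathlib

open MeasureTheory

/-- Analytic core of Theorem 4.9: if `Q' ≥ 2κ(t)Q²` with `Q(0) = Q0 > 0`, `κ`
continuous and strictly positive, and `Q(t) ≤ C(1+t)²`, then
`∫₀^∞ κ ≤ 1/(2Q0)`. -/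
theorem stmt_15 (Q0 C : ℝ) (Q κ : ℝ → ℝ)
    (hQ0 : Q 0 = Q0) (hQ0pos : 0 < Q0)
    (hκcont : Continuous κ) (hκpos : ∀ t : ℝ, 0 ≤ t → 0 < κ t)
    (hdiff : ∀ t : ℝ, 0 ≤ t → DifferentiableAt ℝ Q t)
    (hderiv : ∀ t : ℝ, 0 ≤ t → 2 * κ t * Q t ^ 2 ≤ deriv Q t)
    (hgrowth : ∀ t : ℝ, 0 ≤ t → Q t ≤ C * (1 + t) ^ 2) :
    ∫ t in Set.Ioi (0 : ℝ), κ t ≤ 1 / (2 * Q0) := by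
  have hQcont : ContinuousOn Q (Set.Ici 0) := fun t ht =>
    (hdiff t ht).continuousAt.continuousWithinAt
  have hmono : MonotoneOn Q (Set.Ici (0:ℝ)) := by
    apply monotoneOn_of_deriv_nonneg (convex_Ici 0) hQcont
    · intro t ht
      rw [interior_Ici] at ht
      exact (hdiff t ht.le).differentiableWithinAt
    · intro t ht
      rw [interior_Ici] at ht
      have h1 := hderiv t ht.le
      nlinarith [(hκpos t ht.le), sq_nonneg (Q t)]
  have hQlb : ∀ t : ℝ, 0 ≤ t → Q0 ≤ Q t := by
    intro t ht
    calc Q0 = Q 0 := hQ0.symm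
    _ ≤ Q t := hmono Set.self_mem_Ici ht ht
  have hQne : ∀ t : ℝ, 0 ≤ t → Q t ≠ 0 := fun t ht =>
    (lt_of_lt_of_le hQ0pos (hQlb t ht)).ne'
  have key : ∀ T : ℝ, 0 ≤ T → ∫ s in (0:ℝ)..T, κ s ≤ 1 / (2 * Q0) := by
    intro T hT
    set g : ℝ → ℝ := fun t => (Q t)⁻¹ + 2 * ∫ s in (0:ℝ)..t, κ s with hg
    have hgderiv : ∀ t : ℝ, 0 ≤ t →
        HasDerivAt g (-(deriv Q t) / Q t ^ 2 + 2 * κ t) t := by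
      intro t ht
      have h1 : HasDerivAt (fun t => (Q t)⁻¹) (-(deriv Q t) / Q t ^ 2) t :=
        ((hdiff t ht).hasDerivAt).inv (hQne t ht)
      have h2 : HasDerivAt (fun t => ∫ s in (0:ℝ)..t, κ s) (κ t) t :=
        intervalIntegral.integral_hasDerivAt_right (hκcont.intervalIntegrable 0 t)
          (hκcont.stronglyMeasurableAtFilter volume (nhds t)) hκcont.continuousAt
      exact h1.add (h2.const_mul 2)
    have hanti : AntitoneOn g (Set.Ici (0:ℝ)) := by
      apply antitoneOn_of_deriv_nonpos (convex_Ici 0)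
      · intro t ht
        exact (hgderiv t ht).continuousAt.continuousWithinAt
      · intro t ht
        rw [interior_Ici] at ht
        exact (hgderiv t ht.le).differentiableAt.differentiableWithinAt
      · intro t ht
        rw [interior_Ici] at ht
        rw [(hgderiv t ht.le).deriv]
        have hq := hderiv t ht.le
        have hQpos : 0 < Q t := lt_of_lt_of_le hQ0pos (hQlb t ht.le)
        have hsq : (0:ℝ) < Q t ^ 2 := by positivity
        have : -(deriv Q t) / Q t ^ 2 ≤ -(2 * κ t) := by
          rw [div_le_iff₀ hsq]
          nlinarith
        linarith
    have hgT : g T ≤ g 0 := hanti Set.self_mem_Ici hT hT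
    have hg0 : g 0 = Q0⁻¹ := by simp [hg, hQ0]
    have hinv : 0 < (Q T)⁻¹ := by
      have := lt_of_lt_of_le hQ0pos (hQlb T hT); positivity
    have : 2 * ∫ s in (0:ℝ)..T, κ s ≤ Q0⁻¹ := by
      have := hgT
      rw [hg0] at this
      simp only [hg] at this
      linarith
    rw [div_eq_inv_mul, mul_inv]
    linarith [this]
  by_cases hint : IntegrableOn κ (Set.Ioi (0:ℝ)) volume
  · have htend := MeasureTheory.intervalIntegral_tendsto_integral_Ioi 0 hint
      Filter.tendsto_id
    exact le_of_tendsto htend (Filter.eventually_atTop.2 ⟨0, fun T hT => key T hT⟩)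
  · rw [MeasureTheory.integral_undef hint]
    positivity
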